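/- There exists a unique ρ₀ ∈ (0,1) such that (p+ε)·ρ₀^{Δ_H} + (q−ε)·ρ₀^{−Δ_T} = 1. -/

import Mathlib

open Real Set Filter Topology

/-- There exists a unique `ρ₀ ∈ (0,1)` with `(p+ε)·ρ₀^{Δ_H} + (q−ε)·ρ₀^{−Δ_T} = 1`. -/
theorem existsUnique_root_heavy
    (ε p : ℝ) (hε : ε ∈ Set.Ioo (0:ℝ) (1/2)) (hp : p ∈ Set.Ioo ε (1 - ε))
    (q ΔH ΔT : ℝ) (hq : q = 1 - p)
    (hΔH : ΔH = Real.log ((p + ε) / (p - ε)))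
    (hΔT : ΔT = Real.log ((q + ε) / (q - ε))) :
    ∃! ρ₀ : ℝ, ρ₀ ∈ Set.Ioo (0:ℝ) 1 ∧
      (p + ε) * ρ₀ ^ ΔH + (q - ε) * ρ₀ ^ (-ΔT) = 1 := by
  obtain ⟨hε0, hε2⟩ := hε
  obtain ⟨hpε, hp1⟩ := hp
  set A := p + ε with hA
  set B := q - ε with hB
  have hA0 : 0 < A := by simp only [hA]; linarith
  have hB0 : 0 < B := by simp only [hB, hq]; linarith
  have hb0 : 0 < p - ε := by linarith
  have hA1 : A < 1 := by simp only [hA]; linarith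
  have hqε : 0 < q - ε := by simp only [hq]; linarith
  have hAB : A + B = 1 := by simp only [hA, hB, hq]; ring
  have hΔH0 : 0 < ΔH := by
    rw [hΔH]; apply Real.log_pos
    rw [lt_div_iff₀ hb0]; linarith
  have hΔT0 : 0 < ΔT := by
    rw [hΔT]; apply Real.log_pos
    rw [lt_div_iff₀ hqε]; linarith
  -- derivative at 0 is positive (KL positivity)
  have hD : 0 < A * ΔH - B * ΔT := by
    have h1 : Real.log ((p - ε) / A) < (p - ε) / A - 1 := by
      apply Real.log_lt_sub_one_of_pos (div_pos hb0 hA0)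
      intro h
      have h' : p - ε = A := by
        field_simp at h; linarith
      simp only [hA] at h'; linarith
    have h2 : Real.log ((q + ε) / B) ≤ (q + ε) / B - 1 :=
      Real.log_le_sub_one_of_pos (div_pos (by linarith) hB0)
    have e1 : Real.log ((p - ε) / A) = -ΔH := by
      rw [hΔH, ← Real.log_inv]; congr 1
      rw [inv_div]
    have e2 : Real.log ((q + ε) / B) = ΔT := by rw [hΔT]
    rw [e1] at h1; rw [e2] at h2
    have k1 : A * (-ΔH) < A * ((p - ε) / A - 1) := mul_lt_mul_of_pos_left h1 hA0
    have k2 : B * ΔT ≤ B * ((q + ε) / B - 1) := mul_le_mul_of_nonneg_left h2 hB0.le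
    have r1 : A * ((p - ε) / A - 1) = (p - ε) - A := by field_simp
    have r2 : B * ((q + ε) / B - 1) = (q + ε) - B := by field_simp
    rw [r1] at k1; rw [r2] at k2
    simp only [hA, hB, hq] at k1 k2 ⊢
    nlinarith
  set ψ : ℝ → ℝ := fun t => A * Real.exp (t * ΔH) + B * Real.exp (t * (-ΔT)) with hψ
  have hψ0 : ψ 0 = 1 := by simp [hψ, hAB]
  -- key convexity lemma
  have hkey : ∀ t1 t2 : ℝ, t1 < t2 → t2 < 0 → ψ t1 = 1 → ψ t2 < 1 := by
    intro t1 t2 h12 h20 hψ1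
    have ht1 : t1 < 0 := h12.trans h20
    set l := t2 / t1 with hl
    have hl0 : 0 < l := div_pos_of_neg_of_neg h20 ht1
    have hl1 : l < 1 := by
      rw [hl, div_lt_one_of_neg ht1]; exact h12
    have hmul : l * t1 = t2 := div_mul_cancel₀ t2 ht1.ne
    have hc1 : Real.exp (t2 * ΔH) < l * Real.exp (t1 * ΔH) + (1 - l) * 1 := by
      have h : Real.exp (l • (t1 * ΔH) + (1 - l) • (0:ℝ))
          < l • Real.exp (t1 * ΔH) + (1 - l) • Real.exp 0 :=
        strictConvexOn_exp.2 (mem_univ (t1 * ΔH)) (mem_univ (0:ℝ))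
          (mul_neg_of_neg_of_pos ht1 hΔH0).ne hl0 (by linarith) (by ring)
      rw [smul_eq_mul, smul_eq_mul, smul_eq_mul, smul_eq_mul, Real.exp_zero] at h
      have harg : l * (t1 * ΔH) + (1 - l) * 0 = t2 * ΔH := by
        rw [← mul_assoc, hmul]; ring
      rwa [harg] at h
    have hc2 : Real.exp (t2 * (-ΔT)) < l * Real.exp (t1 * (-ΔT)) + (1 - l) * 1 := by
      have h : Real.exp (l • (t1 * (-ΔT)) + (1 - l) • (0:ℝ))
          < l • Real.exp (t1 * (-ΔT)) + (1 - l) • Real.exp 0 :=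
        strictConvexOn_exp.2 (mem_univ (t1 * (-ΔT))) (mem_univ (0:ℝ))
          (mul_pos_of_neg_of_neg ht1 (neg_neg_of_pos hΔT0)).ne' hl0 (by linarith) (by ring)
      rw [smul_eq_mul, smul_eq_mul, smul_eq_mul, smul_eq_mul, Real.exp_zero] at h
      have harg : l * (t1 * (-ΔT)) + (1 - l) * 0 = t2 * (-ΔT) := by
        rw [← mul_assoc, hmul]; ring
      rwa [harg] at h
    have hψ1' : A * Real.exp (t1 * ΔH) + B * Real.exp (t1 * (-ΔT)) = 1 := hψ1
    have hsum : ψ t2 < A * (l * Real.exp (t1 * ΔH) + (1 - l) * 1)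
        + B * (l * Real.exp (t1 * (-ΔT)) + (1 - l) * 1) :=
      add_lt_add (mul_lt_mul_of_pos_left hc1 hA0) (mul_lt_mul_of_pos_left hc2 hB0)
    have hrw : A * (l * Real.exp (t1 * ΔH) + (1 - l) * 1)
        + B * (l * Real.exp (t1 * (-ΔT)) + (1 - l) * 1)
        = l * (A * Real.exp (t1 * ΔH) + B * Real.exp (t1 * (-ΔT))) + (1 - l) * (A + B) := by
      ring
    rw [hrw, hψ1', hAB] at hsum
    linarith
  -- derivative of ψ at 0
  have hderiv : HasDerivAt ψ (A * ΔH - B * ΔT) 0 := by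
    have d1 : HasDerivAt (fun t : ℝ => Real.exp (t * ΔH)) (Real.exp ((0:ℝ) * ΔH) * ΔH) 0 :=
      (hasDerivAt_mul_const ΔH).exp
    have d2 : HasDerivAt (fun t : ℝ => Real.exp (t * (-ΔT))) (Real.exp ((0:ℝ) * (-ΔT)) * (-ΔT)) 0 :=
      (hasDerivAt_mul_const (-ΔT)).exp
    have d := (d1.const_mul A).add (d2.const_mul B)
    rw [hψ]
    convert d using 1
    all_goals try rfl
    simp only [zero_mul, Real.exp_zero, one_mul]
    ring
  -- find t_b < 0 with ψ t_b < 1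
  obtain ⟨tb, htb0, htbval⟩ : ∃ tb : ℝ, tb < 0 ∧ ψ tb < 1 := by
    rw [hasDerivAt_iff_tendsto_slope] at hderiv
    have hev : ∀ᶠ t in 𝓝[≠] (0:ℝ), 0 < slope ψ 0 t :=
      hderiv.eventually (eventually_gt_nhds hD)
    have hev' : ∀ᶠ t in 𝓝[<] (0:ℝ), 0 < slope ψ 0 t :=
      hev.filter_mono (nhdsWithin_mono 0 (fun x hx => ne_of_lt hx))
    obtain ⟨t, ht⟩ := (hev'.and self_mem_nhdsWithin).exists
    have htlt : t < 0 := ht.2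
    refine ⟨t, htlt, ?_⟩
    have hs : slope ψ 0 t = (ψ t - ψ 0) / (t - 0) := slope_def_field ψ 0 t
    rw [hs, hψ0] at ht
    rcases div_pos_iff.mp ht.1 with ⟨h1, h2⟩ | ⟨h1, h2⟩
    · linarith
    · linarith
  -- find t_a < t_b with ψ t_a > 1
  set ta := min (tb - 1) (-(Real.log (2 / B)) / ΔT) with hta
  have htab : ta < tb := lt_of_le_of_lt (min_le_left _ _) (by linarith)
  have htaval : 1 < ψ ta := by
    have h1 : ta ≤ -(Real.log (2 / B)) / ΔT := min_le_right _ _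
    have h2 : Real.log (2 / B) ≤ ta * (-ΔT) := by
      rw [mul_neg, le_neg]
      calc ta * ΔT ≤ (-(Real.log (2 / B)) / ΔT) * ΔT :=
            mul_le_mul_of_nonneg_right h1 hΔT0.le
        _ = -(Real.log (2 / B)) := by field_simp
    have h3 : (2 : ℝ) / B ≤ Real.exp (ta * (-ΔT)) := by
      calc (2 : ℝ) / B = Real.exp (Real.log (2 / B)) := (Real.exp_log (by positivity)).symm
        _ ≤ Real.exp (ta * (-ΔT)) := Real.exp_le_exp.mpr h2
    have h4 : 2 ≤ B * Real.exp (ta * (-ΔT)) := by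
      calc (2:ℝ) = B * (2 / B) := by field_simp
        _ ≤ B * Real.exp (ta * (-ΔT)) := mul_le_mul_of_nonneg_left h3 hB0.le
    have h5 : 0 < A * Real.exp (ta * ΔH) := by positivity
    show (1:ℝ) < A * Real.exp (ta * ΔH) + B * Real.exp (ta * (-ΔT))
    linarith
  -- IVT
  have hcont : ContinuousOn ψ (Icc ta tb) := by fun_prop
  obtain ⟨t0, ht0mem, ht0val⟩ : ∃ t0 ∈ Ioo ta tb, ψ t0 = 1 := by
    have h := intermediate_value_Ioo' htab.le hcont
    obtain ⟨t0, ht0, heq⟩ := h ⟨htbval, htaval⟩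
    exact ⟨t0, ht0, heq⟩
  have ht00 : t0 < 0 := ht0mem.2.trans htb0
  -- convert between ψ and the rpow expression
  have hconv : ∀ ρ : ℝ, 0 < ρ → (A * ρ ^ ΔH + B * ρ ^ (-ΔT) = ψ (Real.log ρ)) := by
    intro ρ hρ
    rw [hψ]
    simp only [Real.rpow_def_of_pos hρ]
  refine ⟨Real.exp t0, ⟨⟨Real.exp_pos t0, Real.exp_lt_one_iff.mpr ht00⟩, ?_⟩, ?_⟩
  · rw [hconv _ (Real.exp_pos t0), Real.log_exp, ht0val]
  · rintro ρ ⟨⟨hρ0, hρ1⟩, hρval⟩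
    have hr1 : ψ (Real.log ρ) = 1 := (hconv ρ hρ0).symm.trans hρval
    have hr2 : Real.log ρ < 0 := Real.log_neg hρ0 hρ1
    have he1 : ψ t0 = 1 := ht0val
    by_contra hne
    have hlogne : Real.log ρ ≠ t0 := by
      intro h
      exact hne (by rw [← Real.exp_log hρ0, h])
    rcases lt_or_gt_of_ne hlogne with h | h
    · have := hkey _ _ h ht00 hr1
      linarith
    · have := hkey _ _ h hr2 he1
      linarith
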